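/- arXiv:2508.10211 — 8 statements merged into one kernel-verified Lean document; each statement's English description precedes it below -/
import Mathlib

section
/- Let C, D be symmetric n×n real matrices and s a nonzero vector in ℝⁿ. If D = (I − ssᵀ/‖s‖²) C (I − ssᵀ/‖s‖²), then ‖D‖_F² ≤ ‖C‖_F² − ‖Cs‖₂²/‖s‖₂². -/
open Matrix

lemma my_mul_vecMulVec {n : ℕ} (A : Matrix (Fin n) (Fin n) ℝ) (u v : Fin n → ℝ) :
    A * vecMulVec u v = vecMulVec (A *ᵥ u) v := by
  ext i j
  simp only [mul_apply, vecMulVec_apply, mulVec, dotProduct, Finset.sum_mul]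
  exact Finset.sum_congr rfl fun _ _ => by ring

lemma my_vecMulVec_mul {n : ℕ} (A : Matrix (Fin n) (Fin n) ℝ) (u v : Fin n → ℝ) :
    vecMulVec u v * A = vecMulVec u (Aᵀ *ᵥ v) := by
  ext i j
  simp only [mul_apply, vecMulVec_apply, mulVec, dotProduct, Finset.mul_sum, transpose_apply]
  exact Finset.sum_congr rfl fun _ _ => by ring

lemma my_trace_vecMulVec {n : ℕ} (u v : Fin n → ℝ) :
    trace (vecMulVec u v) = u ⬝ᵥ v := by
  simp [Matrix.trace, vecMulVec_apply, dotProduct, Matrix.diag]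

lemma my_vecMulVec_vecMulVec {n : ℕ} (u v x y : Fin n → ℝ) :
    vecMulVec u v * vecMulVec x y = (v ⬝ᵥ x) • vecMulVec u y := by
  ext i j
  simp only [mul_apply, vecMulVec_apply, dotProduct, Matrix.smul_apply, smul_eq_mul, Finset.sum_mul]
  exact Finset.sum_congr rfl fun _ _ => by ring

lemma my_vecMulVec_mulVec {n : ℕ} (u v x : Fin n → ℝ) :
    vecMulVec u v *ᵥ x = (v ⬝ᵥ x) • u := by
  ext i
  simp only [mulVec, vecMulVec_apply, dotProduct, Pi.smul_apply, smul_eq_mul, Finset.sum_mul]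
  exact Finset.sum_congr rfl fun _ _ => by ring

lemma my_smul_vecMulVec {n : ℕ} (a : ℝ) (u v : Fin n → ℝ) :
    vecMulVec (a • u) v = a • vecMulVec u v := by
  ext i j
  simp [vecMulVec_apply, mul_assoc]

/-- If D = (I − ssᵀ/‖s‖²) C (I − ssᵀ/‖s‖²) with C, D symmetric and s ≠ 0, then
‖D‖_F² ≤ ‖C‖_F² − ‖Cs‖₂²/‖s‖₂². -/
theorem stmt_1 (n : ℕ) (C D : Matrix (Fin n) (Fin n) ℝ) (s : Fin n → ℝ)
    (hC : C.IsSymm) (hD : D.IsSymm) (hs : s ≠ 0)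
    (hDeq : D = (1 - (s ⬝ᵥ s)⁻¹ • vecMulVec s s) * C * (1 - (s ⬝ᵥ s)⁻¹ • vecMulVec s s)) :
    trace (Dᵀ * D) ≤ trace (Cᵀ * C) - ((C *ᵥ s) ⬝ᵥ (C *ᵥ s)) / (s ⬝ᵥ s) := by
  set α := s ⬝ᵥ s with hα
  set u := C *ᵥ s with hu
  have hα0 : 0 < α := by
    have h1 : α ≠ 0 := fun h => hs (dotProduct_self_eq_zero.mp h)
    have h2 : 0 ≤ α := by
      rw [hα, dotProduct]
      exact Finset.sum_nonneg fun i _ => mul_self_nonneg _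
    exact lt_of_le_of_ne h2 (Ne.symm h1)
  have hCs : Cᵀ *ᵥ s = u := by rw [hC]
  set β := u ⬝ᵥ s with hβ'
  have hβ : s ⬝ᵥ u = β := dotProduct_comm _ _
  have hD2 : D = C - α⁻¹ • vecMulVec u s - α⁻¹ • vecMulVec s u
      + (α⁻¹ * α⁻¹ * β) • vecMulVec s s := by
    rw [hDeq]
    simp only [mul_sub, sub_mul, mul_one, one_mul, Matrix.mul_smul, Matrix.smul_mul,
      my_vecMulVec_mul, my_mul_vecMulVec, my_vecMulVec_vecMulVec, my_vecMulVec_mulVec,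
      my_smul_vecMulVec, smul_smul, hCs, hβ, hβ',
      transpose_transpose, transpose_one, one_mulVec]
    module
  have hcu : (C *ᵥ u) ⬝ᵥ s = u ⬝ᵥ u := by
    have : (C *ᵥ u) ⬝ᵥ s = u ⬝ᵥ (Cᵀ *ᵥ s) := by
      simp only [dotProduct, mulVec, dotProduct, transpose_apply, Finset.sum_mul,
        Finset.mul_sum]
      rw [Finset.sum_comm]
      exact Finset.sum_congr rfl fun _ _ => Finset.sum_congr rfl fun _ _ => by ring
    rw [this, hCs]
  have hCu : Cᵀ *ᵥ u = C *ᵥ u := by rw [hC]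
  have hsCu : s ⬝ᵥ (C *ᵥ u) = u ⬝ᵥ u := by rw [dotProduct_comm]; exact hcu
  have hαne : α ≠ 0 := ne_of_gt hα0
  rw [show Dᵀ = D from hD, show Cᵀ = C from hC, hD2]
  have expand : trace ((C - α⁻¹ • vecMulVec u s - α⁻¹ • vecMulVec s u
      + (α⁻¹ * α⁻¹ * β) • vecMulVec s s) * (C - α⁻¹ • vecMulVec u s - α⁻¹ • vecMulVec s u
      + (α⁻¹ * α⁻¹ * β) • vecMulVec s s))
      = trace (C * C) - 2 * (α⁻¹ * (u ⬝ᵥ u)) + α⁻¹ * α⁻¹ * (β * β) := by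
    simp only [mul_sub, sub_mul, mul_add, add_mul, Matrix.smul_mul, Matrix.mul_smul,
    my_mul_vecMulVec, my_vecMulVec_mul, my_vecMulVec_vecMulVec, smul_smul,
    my_vecMulVec_mulVec, my_smul_vecMulVec, smul_dotProduct, dotProduct_smul,
    trace_add, trace_sub, trace_smul, my_trace_vecMulVec, hCs, hCu, hβ, hcu, hsCu,
    ← hu, ← hβ', ← hα, smul_eq_mul, mul_one, one_mul]
    field_simp
    ring
  rw [expand]
  have csb : β ^ 2 ≤ α * (u ⬝ᵥ u) := by
    have h := Finset.sum_mul_sq_le_sq_mul_sq Finset.univ u s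
    simp only [hβ', hα, dotProduct]
    calc (∑ i, u i * s i) ^ 2 ≤ (∑ i, u i ^ 2) * ∑ i, s i ^ 2 := h
      _ = (∑ i, s i * s i) * ∑ i, u i * u i := by
          rw [mul_comm]
          congr 1 <;> exact Finset.sum_congr rfl fun i _ => by ring
  have huu : 0 ≤ u ⬝ᵥ u := by
    rw [dotProduct]; exact Finset.sum_nonneg fun i _ => mul_self_nonneg _
  rw [div_eq_mul_inv]
  have key : α⁻¹ * α⁻¹ * β ^ 2 ≤ α⁻¹ * (u ⬝ᵥ u) := by
    have := mul_le_mul_of_nonneg_left csb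
      (le_of_lt (mul_pos (inv_pos.mpr hα0) (inv_pos.mpr hα0)))
    calc α⁻¹ * α⁻¹ * β ^ 2 ≤ α⁻¹ * α⁻¹ * (α * (u ⬝ᵥ u)) := this
      _ = α⁻¹ * (α⁻¹ * α) * (u ⬝ᵥ u) := by ring
      _ = α⁻¹ * (u ⬝ᵥ u) := by rw [inv_mul_cancel₀ hαne, mul_one]
  nlinarith [key, sq_nonneg β]
end

section
/- Let L be a symmetric positive definite n×n real matrix with L ⪰ I or L ⪯ I (in the Loewner order), and let u ∈ ℝⁿ satisfy Lu ≠ u. Then ‖(L⁻¹ − I)(I − L)u‖₂²/‖(I − L)u‖₂² ≥ ‖(L⁻¹ − I)u‖₂²/‖u‖₂², with equality if and only if u is an eigenvector of L. -/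
open Matrix Finset

-- double sum identity
lemma ds (n : ℕ) (w x y : Fin n → ℝ) :
    ∑ i, ∑ j, w i * w j * ((x i - x j) * (y i - y j))
      = 2 * ((∑ i, w i) * (∑ i, x i * y i * w i) - (∑ i, x i * w i) * (∑ i, y i * w i)) := by
  have h : ∀ i j : Fin n, w i * w j * ((x i - x j) * (y i - y j))
      = (x i * y i * w i) * w j + w i * (x j * y j * w j)
        - (x i * w i) * (y j * w j) - (y i * w i) * (x j * w j) := by intros; ring
  simp only [h, Finset.sum_sub_distrib, Finset.sum_add_distrib, ← Finset.sum_mul,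
    ← Finset.mul_sum]
  ring

-- term positivity
lemma term_pos {s t : ℝ} (hs : 0 < s) (ht : 0 < t)
    (hside : (1 ≤ s ∧ 1 ≤ t) ∨ (s ≤ 1 ∧ t ≤ 1)) (hne : s ≠ t) :
    0 < ((s⁻¹ - 1) ^ 2 - (t⁻¹ - 1) ^ 2) * ((1 - s) ^ 2 - (1 - t) ^ 2) := by
  have key : ((s⁻¹ - 1) ^ 2 - (t⁻¹ - 1) ^ 2) * ((1 - s) ^ 2 - (1 - t) ^ 2)
      = ((t - s) ^ 2 * ((t + s - 2 * s * t) * (2 - s - t))) / (s ^ 2 * t ^ 2) := by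
    field_simp
    ring
  rw [key]
  apply div_pos
  · have hts : t - s ≠ 0 := sub_ne_zero.mpr (Ne.symm hne)
    have h2 : (0:ℝ) < (t - s) ^ 2 := pow_two_pos_of_ne_zero hts
    rcases hside with ⟨h1, h1'⟩ | ⟨h1, h1'⟩
    · have hx : t + s - 2 * s * t < 0 := by nlinarith
      have hy : 2 - s - t < 0 := by
        rcases lt_or_eq_of_le h1 with h | h
        · nlinarith
        · rcases lt_or_eq_of_le h1' with h' | h'
          · nlinarith
          · exact absurd (h.symm.trans h') hne
      exact mul_pos h2 (mul_pos_of_neg_of_neg hx hy)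
    · have hx : 0 < t + s - 2 * s * t := by
        rcases lt_or_eq_of_le h1 with h | h
        · nlinarith
        · rcases lt_or_eq_of_le h1' with h' | h'
          · nlinarith
          · exact absurd (h.trans h'.symm) hne
      have hy : 0 < 2 - s - t := by
        rcases lt_or_eq_of_le h1 with h | h
        · nlinarith
        · rcases lt_or_eq_of_le h1' with h' | h'
          · nlinarith
          · exact absurd (h.trans h'.symm) hne
      exact mul_pos h2 (mul_pos hx hy)
  · positivity

lemma term_nonneg {s t : ℝ} (hs : 0 < s) (ht : 0 < t)
    (hside : (1 ≤ s ∧ 1 ≤ t) ∨ (s ≤ 1 ∧ t ≤ 1)) :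
    0 ≤ ((s⁻¹ - 1) ^ 2 - (t⁻¹ - 1) ^ 2) * ((1 - s) ^ 2 - (1 - t) ^ 2) := by
  rcases eq_or_ne s t with rfl | hne
  · simp
  · exact (term_pos hs ht hside hne).le

lemma key_sum (n : ℕ) (lam c : Fin n → ℝ) (hpos : ∀ i, 0 < lam i)
    (hside : (∀ i, 1 ≤ lam i) ∨ (∀ i, lam i ≤ 1))
    (hY : (∑ i, ((1 - lam i) * c i) * ((1 - lam i) * c i)) ≠ 0) :
    (∑ i, (((lam i)⁻¹ - 1) * c i) * (((lam i)⁻¹ - 1) * c i)) / (∑ i, c i * c i)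
      ≤ (∑ i, ((((lam i)⁻¹ - 1) * (1 - lam i)) * c i) * ((((lam i)⁻¹ - 1) * (1 - lam i)) * c i))
          / (∑ i, ((1 - lam i) * c i) * ((1 - lam i) * c i))
    ∧ ((∑ i, ((((lam i)⁻¹ - 1) * (1 - lam i)) * c i) * ((((lam i)⁻¹ - 1) * (1 - lam i)) * c i))
          / (∑ i, ((1 - lam i) * c i) * ((1 - lam i) * c i))
        = (∑ i, (((lam i)⁻¹ - 1) * c i) * (((lam i)⁻¹ - 1) * c i)) / (∑ i, c i * c i)
      ↔ ∃ μ, ∀ i, lam i * c i = μ * c i) := by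
  set x : Fin n → ℝ := fun i => ((lam i)⁻¹ - 1) ^ 2 with hx
  set y : Fin n → ℝ := fun i => (1 - lam i) ^ 2 with hy
  set w : Fin n → ℝ := fun i => c i ^ 2 with hw
  have e1 : ∑ i, c i * c i = ∑ i, w i :=
    Finset.sum_congr rfl fun i _ => by simp [hw]; ring
  have e2 : ∑ i, (((lam i)⁻¹ - 1) * c i) * (((lam i)⁻¹ - 1) * c i) = ∑ i, x i * w i :=
    Finset.sum_congr rfl fun i _ => by simp [hx, hw]; ring
  have e3 : ∑ i, ((1 - lam i) * c i) * ((1 - lam i) * c i) = ∑ i, y i * w i :=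
    Finset.sum_congr rfl fun i _ => by simp [hy, hw]; ring
  have e4 : ∑ i, ((((lam i)⁻¹ - 1) * (1 - lam i)) * c i) * ((((lam i)⁻¹ - 1) * (1 - lam i)) * c i)
      = ∑ i, x i * y i * w i :=
    Finset.sum_congr rfl fun i _ => by simp [hx, hy, hw]; ring
  rw [e3] at hY
  rw [e1, e2, e3, e4]
  have hwnn : ∀ i, 0 ≤ w i := fun i => by simp [hw]; positivity
  have hYnn : ∀ i ∈ Finset.univ, 0 ≤ y i * w i :=
    fun i _ => mul_nonneg (by simp [hy]; positivity) (hwnn i)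
  have hY' : 0 < ∑ i, y i * w i := lt_of_le_of_ne (Finset.sum_nonneg hYnn) (Ne.symm hY)
  obtain ⟨i0, _, h0⟩ := Finset.exists_ne_zero_of_sum_ne_zero hY
  have hc0 : c i0 ≠ 0 := by
    intro h; apply h0; simp [hw, h]
  have hS : 0 < ∑ i, w i := by
    apply Finset.sum_pos' (fun i _ => hwnn i)
    exact ⟨i0, Finset.mem_univ i0, by have := pow_two_pos_of_ne_zero hc0; simpa [hw] using this⟩
  have hside' : ∀ i j, (1 ≤ lam i ∧ 1 ≤ lam j) ∨ (lam i ≤ 1 ∧ lam j ≤ 1) := by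
    rcases hside with h | h
    · exact fun i j => Or.inl ⟨h i, h j⟩
    · exact fun i j => Or.inr ⟨h i, h j⟩
  have htermnn : ∀ i j : Fin n, 0 ≤ w i * w j * ((x i - x j) * (y i - y j)) :=
    fun i j => mul_nonneg (mul_nonneg (hwnn i) (hwnn j))
      (term_nonneg (hpos i) (hpos j) (hside' i j))
  have hT := ds n w x y
  have hT0 : 0 ≤ ∑ i, ∑ j, w i * w j * ((x i - x j) * (y i - y j)) :=
    Finset.sum_nonneg fun i _ => Finset.sum_nonneg fun j _ => htermnn i j
  rw [hT] at hT0
  constructor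
  · rw [div_le_div_iff₀ hS hY']
    nlinarith [hT0]
  · rw [div_eq_div_iff hY'.ne' hS.ne']
    constructor
    · intro heq
      have hT0' : ∑ i, ∑ j, w i * w j * ((x i - x j) * (y i - y j)) = 0 := by
        rw [hT]; nlinarith [heq]
      have hall := (Finset.sum_eq_zero_iff_of_nonneg
        (fun i (_ : i ∈ Finset.univ) => Finset.sum_nonneg fun j _ => htermnn i j)).mp hT0'
      have hterm0 : ∀ i j : Fin n, w i * w j * ((x i - x j) * (y i - y j)) = 0 := by
        intro i j
        exact (Finset.sum_eq_zero_iff_of_nonneg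
          (fun j (_ : j ∈ Finset.univ) => htermnn i j)).mp (hall i (Finset.mem_univ i)) j
          (Finset.mem_univ j)
      refine ⟨lam i0, fun i => ?_⟩
      rcases eq_or_ne (c i) 0 with h | h
      · simp [h]
      · have hlam : lam i = lam i0 := by
          by_contra hne
          have hp : 0 < (x i - x i0) * (y i - y i0) :=
            term_pos (hpos i) (hpos i0) (hside' i i0) hne
          have hwp : 0 < w i * w i0 :=
            mul_pos (by simpa [hw] using pow_two_pos_of_ne_zero h)
              (by simpa [hw] using pow_two_pos_of_ne_zero hc0)
          have := hterm0 i i0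
          nlinarith [mul_pos hwp hp]
        rw [hlam]
    · rintro ⟨μ, hμ⟩
      have hterm0 : ∀ i j : Fin n, w i * w j * ((x i - x j) * (y i - y j)) = 0 := by
        intro i j
        rcases eq_or_ne (c i) 0 with h | h
        · simp [hw, h]
        rcases eq_or_ne (c j) 0 with h' | h'
        · simp [hw, h']
        have hi : lam i = μ := mul_right_cancel₀ h (hμ i)
        have hj : lam j = μ := mul_right_cancel₀ h' (hμ j)
        have hij : lam i = lam j := hi.trans hj.symm
        have hxij : x i - x j = 0 := by simp [hx, hij]
        rw [hxij]; ring
      have hT0' : ∑ i, ∑ j, w i * w j * ((x i - x j) * (y i - y j)) = 0 :=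
        Finset.sum_eq_zero fun i _ => Finset.sum_eq_zero fun j _ => hterm0 i j
      rw [hT0'] at hT
      nlinarith [hT]

lemma dot_self_parseval (n : ℕ) (b : OrthonormalBasis (Fin n) ℝ (EuclideanSpace ℝ (Fin n)))
    (z : EuclideanSpace ℝ (Fin n)) :
    ⇑z ⬝ᵥ ⇑z = ∑ i, (b.repr z i) * (b.repr z i) := by
  have h : (inner ℝ z z : ℝ) = inner ℝ (b.repr z) (b.repr z) := (b.repr.inner_map_map z z).symm
  have h2 : (inner ℝ (b.repr z) (b.repr z) : ℝ) = ∑ i, (b.repr z i) * (b.repr z i) := by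
    rw [EuclideanSpace.inner_eq_star_dotProduct]; rfl
  exact h.trans h2

lemma coord (n : ℕ) (b : OrthonormalBasis (Fin n) ℝ (EuclideanSpace ℝ (Fin n)))
    (M : Matrix (Fin n) (Fin n) ℝ) (m : Fin n → ℝ)
    (hM : ∀ i, M *ᵥ ⇑(b i) = m i • ⇑(b i)) (z : EuclideanSpace ℝ (Fin n)) (j : Fin n) :
    b.repr (Matrix.toEuclideanLin M z) j = m j * b.repr z j := by
  have hM' : ∀ i, Matrix.toEuclideanLin M (b i) = m i • b i := fun i => by rw [Matrix.toEuclideanLin_apply, hM i]; rfl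
  conv_lhs => rw [← b.sum_repr z]
  rw [map_sum]
  simp only [_root_.map_smul, hM']
  rw [map_sum]
  simp only [_root_.map_smul, b.repr_self]
  rw [WithLp.ofLp_sum, Finset.sum_apply]
  simp only [PiLp.smul_apply, EuclideanSpace.single_apply, smul_eq_mul]
  rw [Finset.sum_eq_single j]
  · simp; ring
  · intro i _ hij; simp [Ne.symm hij]
  · intro h; simp at h

lemma dot_self_eq (n : ℕ) (b : OrthonormalBasis (Fin n) ℝ (EuclideanSpace ℝ (Fin n)))
    (M : Matrix (Fin n) (Fin n) ℝ) (m : Fin n → ℝ)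
    (hM : ∀ i, M *ᵥ ⇑(b i) = m i • ⇑(b i)) (z : EuclideanSpace ℝ (Fin n)) :
    (M *ᵥ ⇑z) ⬝ᵥ (M *ᵥ ⇑z) = ∑ i, (m i * b.repr z i) * (m i * b.repr z i) := by
  have h0 : (M *ᵥ ⇑z) ⬝ᵥ (M *ᵥ ⇑z)
      = ∑ i, (b.repr (Matrix.toEuclideanLin M z) i) * (b.repr (Matrix.toEuclideanLin M z) i) :=
    dot_self_parseval n b (Matrix.toEuclideanLin M z)
  rw [h0]
  exact Finset.sum_congr rfl fun i _ => by rw [coord n b M m hM]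

/-- For L symmetric positive definite with L ⪰ I or L ⪯ I and Lu ≠ u,
‖(L⁻¹−I)(I−L)u‖²/‖(I−L)u‖² ≥ ‖(L⁻¹−I)u‖²/‖u‖², equality iff u is an eigenvector of L. -/
theorem stmt_6 (n : ℕ) (L : Matrix (Fin n) (Fin n) ℝ) (hL : L.PosDef)
    (hord : (L - 1).PosSemidef ∨ (1 - L).PosSemidef)
    (u : Fin n → ℝ) (hu : L *ᵥ u ≠ u) :
    (((L⁻¹ - 1) *ᵥ u) ⬝ᵥ ((L⁻¹ - 1) *ᵥ u)) / (u ⬝ᵥ u)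
      ≤ (((L⁻¹ - 1) *ᵥ ((1 - L) *ᵥ u)) ⬝ᵥ ((L⁻¹ - 1) *ᵥ ((1 - L) *ᵥ u)))
          / (((1 - L) *ᵥ u) ⬝ᵥ ((1 - L) *ᵥ u))
    ∧ ((((L⁻¹ - 1) *ᵥ ((1 - L) *ᵥ u)) ⬝ᵥ ((L⁻¹ - 1) *ᵥ ((1 - L) *ᵥ u)))
          / (((1 - L) *ᵥ u) ⬝ᵥ ((1 - L) *ᵥ u))
        = (((L⁻¹ - 1) *ᵥ u) ⬝ᵥ ((L⁻¹ - 1) *ᵥ u)) / (u ⬝ᵥ u)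
      ↔ ∃ μ : ℝ, L *ᵥ u = μ • u) := by
  have hH : L.IsHermitian := hL.1
  set b := hH.eigenvectorBasis with hb
  set lam := hH.eigenvalues with hlamdef
  have hpos : ∀ i, 0 < lam i := fun i => hL.eigenvalues_pos i
  have hei : ∀ i, L *ᵥ ⇑(b i) = lam i • ⇑(b i) := hH.mulVec_eigenvectorBasis
  have hdet : IsUnit L.det := isUnit_iff_ne_zero.mpr hL.det_pos.ne'
  -- eigen action of L⁻¹
  have hinv : ∀ i, L⁻¹ *ᵥ ⇑(b i) = (lam i)⁻¹ • ⇑(b i) := by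
    intro i
    have h1 : L⁻¹ *ᵥ (L *ᵥ ⇑(b i)) = ⇑(b i) := by
      rw [Matrix.mulVec_mulVec, Matrix.nonsing_inv_mul L hdet, Matrix.one_mulVec]
    rw [hei i, Matrix.mulVec_smul] at h1
    have h2 := congrArg (fun v => (lam i)⁻¹ • v) h1
    simpa [smul_smul, inv_mul_cancel₀ (hpos i).ne'] using h2
  have hAei : ∀ i, (L⁻¹ - 1) *ᵥ ⇑(b i) = ((lam i)⁻¹ - 1) • ⇑(b i) := by
    intro i
    rw [Matrix.sub_mulVec, hinv i, Matrix.one_mulVec, sub_smul, one_smul]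
  have hBei : ∀ i, (1 - L) *ᵥ ⇑(b i) = (1 - lam i) • ⇑(b i) := by
    intro i
    rw [Matrix.sub_mulVec, hei i, Matrix.one_mulVec, sub_smul, one_smul]
  have hABei : ∀ i, ((L⁻¹ - 1) * (1 - L)) *ᵥ ⇑(b i)
      = (((lam i)⁻¹ - 1) * (1 - lam i)) • ⇑(b i) := by
    intro i
    rw [← Matrix.mulVec_mulVec, hBei i, Matrix.mulVec_smul, hAei i, smul_smul, mul_comm]
  -- coordinates of u
  set ue : EuclideanSpace ℝ (Fin n) := (WithLp.equiv 2 (Fin n → ℝ)).symm u with hue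
  set c : Fin n → ℝ := fun i => b.repr ue i with hc
  -- side condition
  have hside : (∀ i, 1 ≤ lam i) ∨ (∀ i, lam i ≤ 1) := by
    have hnorm : ∀ i, ⇑(b i) ⬝ᵥ ⇑(b i) = 1 := by
      intro i
      have h1 : (inner ℝ (b i) (b i) : ℝ) = 1 := by
        rw [real_inner_self_eq_norm_sq, b.orthonormal.1 i]; norm_num
      exact h1
    rcases hord with h | h
    · left
      intro i
      have h2 := h.dotProduct_mulVec_nonneg ⇑(b i)
      have h3 : (L - 1) *ᵥ ⇑(b i) = (lam i - 1) • ⇑(b i) := by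
        rw [Matrix.sub_mulVec, hei i, Matrix.one_mulVec, sub_smul, one_smul]
      rw [h3] at h2
      simp only [star_trivial, dotProduct_smul, smul_eq_mul, hnorm i, mul_one,
        RCLike.re_to_real] at h2
      linarith
    · right
      intro i
      have h2 := h.dotProduct_mulVec_nonneg ⇑(b i)
      have h3 : (1 - L) *ᵥ ⇑(b i) = (1 - lam i) • ⇑(b i) := hBei i
      rw [h3] at h2
      simp only [star_trivial, dotProduct_smul, smul_eq_mul, hnorm i, mul_one,
        RCLike.re_to_real] at h2
      linarith
  -- dot products
  have eS : u ⬝ᵥ u = ∑ i, c i * c i := dot_self_parseval n b ue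
  have eX : ((L⁻¹ - 1) *ᵥ u) ⬝ᵥ ((L⁻¹ - 1) *ᵥ u)
      = ∑ i, (((lam i)⁻¹ - 1) * c i) * (((lam i)⁻¹ - 1) * c i) :=
    dot_self_eq n b (L⁻¹ - 1) (fun i => (lam i)⁻¹ - 1) hAei ue
  have eY : ((1 - L) *ᵥ u) ⬝ᵥ ((1 - L) *ᵥ u)
      = ∑ i, ((1 - lam i) * c i) * ((1 - lam i) * c i) :=
    dot_self_eq n b (1 - L) (fun i => 1 - lam i) hBei ue
  have eZ : ((L⁻¹ - 1) *ᵥ ((1 - L) *ᵥ u)) ⬝ᵥ ((L⁻¹ - 1) *ᵥ ((1 - L) *ᵥ u))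
      = ∑ i, ((((lam i)⁻¹ - 1) * (1 - lam i)) * c i) * ((((lam i)⁻¹ - 1) * (1 - lam i)) * c i) := by
    rw [Matrix.mulVec_mulVec]
    exact dot_self_eq n b ((L⁻¹ - 1) * (1 - L)) (fun i => ((lam i)⁻¹ - 1) * (1 - lam i)) hABei ue
  have hBu : (1 - L) *ᵥ u ≠ 0 := by
    intro h
    apply hu
    rw [Matrix.sub_mulVec, Matrix.one_mulVec, sub_eq_zero] at h
    exact h.symm
  have hY : (∑ i, ((1 - lam i) * c i) * ((1 - lam i) * c i)) ≠ 0 := by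
    rw [← eY]
    exact fun h => hBu (dotProduct_self_eq_zero.mp h)
  -- eigenvector condition
  have heig : ∀ μ : ℝ, (L *ᵥ u = μ • u) ↔ (∀ i, lam i * c i = μ * c i) := by
    intro μ
    constructor
    · intro h i
      have h' : Matrix.toEuclideanLin L ue = μ • ue := congrArg (WithLp.toLp 2) h
      have h1 := coord n b L lam hei ue i
      rw [h'] at h1
      rw [← h1]
      simp [_root_.map_smul, hc]
    · intro h
      have h1 : b.repr (Matrix.toEuclideanLin L ue) = b.repr (μ • ue) := by
        ext i
        rw [coord n b L lam hei ue i]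
        simp only [_root_.map_smul]
        exact h i
      have h2 : Matrix.toEuclideanLin L ue = μ • ue := b.repr.injective h1
      exact congrArg WithLp.ofLp h2
  obtain ⟨hineq, hiff⟩ := key_sum n lam c hpos hside hY
  rw [eS, eX, eY, eZ]
  refine ⟨hineq, ?_⟩
  rw [hiff]
  exact ⟨fun ⟨μ, h⟩ => ⟨μ, (heig μ).mpr h⟩, fun ⟨μ, h⟩ => ⟨μ, (heig μ).mp h⟩⟩
end

section
/- Let A and B be symmetric positive definite n×n real matrices with B ⪰ A or B ⪯ A, and set W = B⁻¹(B − A). Then for any s ∈ ℝⁿ with Ws ≠ 0, ‖A^{-1/2}(B − A)s‖₂²/‖A^{1/2}s‖₂² ≤ ‖A^{-1/2}(B − A)Ws‖₂²/‖A^{1/2}Ws‖₂², with equality if and only if s is an eigenvector of W. -/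
open Matrix

set_option maxHeartbeats 1000000

lemma key_strict (c₁ c₂ : ℝ) (h₁ : 0 < c₁) (h₂ : 0 < c₂)
    (hsign : (0 ≤ c₁⁻¹ - 1 ∧ 0 ≤ c₂⁻¹ - 1) ∨ (c₁⁻¹ - 1 ≤ 0 ∧ c₂⁻¹ - 1 ≤ 0))
    (hne : c₁ ≠ c₂) :
    0 < ((c₁⁻¹ - 1)^2 - (c₂⁻¹ - 1)^2) * ((1 - c₁)^2 - (1 - c₂)^2) := by
  have e₁ : c₁ * c₁⁻¹ = 1 := mul_inv_cancel₀ h₁.ne'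
  have e₂ : c₂ * c₂⁻¹ = 1 := mul_inv_cancel₀ h₂.ne'
  have hid : ((c₁⁻¹ - 1)^2 - (c₂⁻¹ - 1)^2) * ((1 - c₁)^2 - (1 - c₂)^2)
      = (c₂ - c₁)^2 * ((c₂*(1-c₁) + c₁*(1-c₂)) * ((1-c₁) + (1-c₂))) / (c₁*c₂)^2 := by
    field_simp
    ring
  rw [hid]
  apply div_pos _ (by positivity)
  have hsq : 0 < (c₂ - c₁)^2 := by
    have : c₂ - c₁ ≠ 0 := sub_ne_zero.mpr (Ne.symm hne)
    positivity
  apply mul_pos hsq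
  rcases hsign with ⟨ha, hb⟩ | ⟨ha, hb⟩
  · have hc1 : c₁ ≤ 1 := by nlinarith
    have hc2 : c₂ ≤ 1 := by nlinarith
    rcases lt_or_gt_of_ne hne with h | h
    · have : 0 < 1 - c₁ := by linarith
      nlinarith
    · have : 0 < 1 - c₂ := by linarith
      nlinarith
  · have hc1 : 1 ≤ c₁ := by nlinarith
    have hc2 : 1 ≤ c₂ := by nlinarith
    rcases lt_or_gt_of_ne hne with h | h
    · have : 0 < c₂ - 1 := by linarith
      nlinarith
    · have : 0 < c₁ - 1 := by linarith
      nlinarith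

/-- Image operator improvement for BFGS/DFP with W = B⁻¹(B − A), assuming A, B
symmetric positive definite with B ⪰ A or B ⪯ A. -/
theorem stmt_7 (n : ℕ) (A B : Matrix (Fin n) (Fin n) ℝ)
    (hA : A.PosDef) (hB : B.PosDef)
    (hord : (B - A).PosSemidef ∨ (A - B).PosSemidef)
    (W : Matrix (Fin n) (Fin n) ℝ) (hW : W = B⁻¹ * (B - A))
    (Asqrt : Matrix (Fin n) (Fin n) ℝ) (hAsqrt : Asqrt = (hA.posSemidef.1.eigenvectorUnitary : Matrix (Fin n) (Fin n) ℝ) *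
      diagonal (Real.sqrt ∘ hA.posSemidef.1.eigenvalues) *
      (star hA.posSemidef.1.eigenvectorUnitary : Matrix (Fin n) (Fin n) ℝ))
    (s : Fin n → ℝ) (hs : W *ᵥ s ≠ 0)
    (q : (Fin n → ℝ) → ℝ)
    (hq : q = fun v => ((Asqrt⁻¹ *ᵥ ((B - A) *ᵥ v)) ⬝ᵥ (Asqrt⁻¹ *ᵥ ((B - A) *ᵥ v)))
        / ((Asqrt *ᵥ v) ⬝ᵥ (Asqrt *ᵥ v))) :
    q s ≤ q (W *ᵥ s) ∧ (q s = q (W *ᵥ s) ↔ ∃ μ : ℝ, W *ᵥ s = μ • s) := by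
  classical
  subst hq hW hAsqrt
  dsimp only
  set R : Matrix (Fin n) (Fin n) ℝ := (hA.posSemidef.1.eigenvectorUnitary : Matrix (Fin n) (Fin n) ℝ) *
      diagonal (Real.sqrt ∘ hA.posSemidef.1.eigenvalues) *
      (star hA.posSemidef.1.eigenvectorUnitary : Matrix (Fin n) (Fin n) ℝ) with hRdef
  have hRH : R.IsHermitian := by
    rw [hRdef]
    simp only [IsHermitian, conjTranspose_mul, star_eq_conjTranspose,
      conjTranspose_conjTranspose, diagonal_conjTranspose, star_trivial, mul_assoc]
  have hRR : R * R = A := by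
    have hV : ∀ X : Matrix (Fin n) (Fin n) ℝ,
        star (hA.posSemidef.1.eigenvectorUnitary : Matrix (Fin n) (Fin n) ℝ) *
          ((hA.posSemidef.1.eigenvectorUnitary : Matrix (Fin n) (Fin n) ℝ) * X) = X := by
      intro X; rw [← mul_assoc]; simp
    have h := hA.posSemidef.1.spectral_theorem
    rw [hRdef]
    conv_rhs => rw [h]
    rw [Unitary.conjStarAlgAut_apply]
    simp only [mul_assoc, hV]
    rw [← mul_assoc (diagonal _) (diagonal _), diagonal_mul_diagonal]
    congr 1
    congr 1
    congr 1
    funext i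
    exact Real.mul_self_sqrt (hA.posSemidef.eigenvalues_nonneg i)
  clear_value R
  have hdetR : IsUnit R.det := by
    have h1 : R.det * R.det = A.det := by rw [← det_mul, hRR]
    have h2 : R.det ≠ 0 := by
      intro h
      rw [h, mul_zero] at h1
      exact hA.det_pos.ne' h1.symm
    exact h2.isUnit
  have hRiR : R⁻¹ * R = 1 := nonsing_inv_mul R hdetR
  have hRRi : R * R⁻¹ = 1 := mul_nonsing_inv R hdetR
  have hdetB : IsUnit B.det := hB.det_pos.ne'.isUnit
  have hBiB : B⁻¹ * B = 1 := nonsing_inv_mul B hdetB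
  have hBBi : B * B⁻¹ = 1 := mul_nonsing_inv B hdetB
  have hRT : Rᵀ = R := by
    rw [← conjTranspose_eq_transpose_of_trivial]; exact hRH.eq
  have hRiH : R⁻¹.IsHermitian := hRH.inv
  set C : Matrix (Fin n) (Fin n) ℝ := R * B⁻¹ * R with hCdef
  have hRinj : ∀ v : Fin n → ℝ, R *ᵥ v = 0 → v = 0 := by
    intro v hv
    have h : R⁻¹ *ᵥ (R *ᵥ v) = v := by rw [mulVec_mulVec, hRiR, one_mulVec]
    rw [hv, mulVec_zero] at h
    exact h.symm
  have hC : C.PosDef := by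
    refine PosDef.of_dotProduct_mulVec_pos ?_ ?_
    · show Cᴴ = C
      rw [hCdef, conjTranspose_mul, conjTranspose_mul, hRH.eq, hB.inv.isHermitian.eq, mul_assoc]
    · intro x hx
      have hx' : R *ᵥ x ≠ 0 := fun h => hx (hRinj x h)
      have h1 := hB.inv.dotProduct_mulVec_pos hx'
      have h2 : star x ⬝ᵥ (C *ᵥ x) = star (R *ᵥ x) ⬝ᵥ (B⁻¹ *ᵥ (R *ᵥ x)) := by
        rw [hCdef, ← mulVec_mulVec, ← mulVec_mulVec]
        rw [star_trivial, star_trivial, dotProduct_mulVec, ← mulVec_transpose, hRT]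
      rw [h2]; exact h1
  have hCH : C.IsHermitian := hC.isHermitian
  set U : Matrix (Fin n) (Fin n) ℝ :=
    (IsHermitian.eigenvectorUnitary hCH : Matrix (Fin n) (Fin n) ℝ) with hUdef
  set c : Fin n → ℝ := hCH.eigenvalues with hcdef
  have hcpos : ∀ i, 0 < c i := hC.eigenvalues_pos
  have hUU : star U * U = 1 := mem_unitaryGroup_iff'.mp (IsHermitian.eigenvectorUnitary hCH).2
  have hUUs : U * star U = 1 := mem_unitaryGroup_iff.mp (IsHermitian.eigenvectorUnitary hCH).2
  have hspec : C = U * diagonal c * star U := by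
    have h := hCH.spectral_theorem
    have h2 : (RCLike.ofReal ∘ hCH.eigenvalues : Fin n → ℝ) = c := funext fun i => rfl
    rw [h2] at h
    exact h
  have hdiagmul : ∀ f g : Fin n → ℝ,
      (U * diagonal f * star U) * (U * diagonal g * star U)
        = U * diagonal (fun i => f i * g i) * star U := by
    intro f g
    simp only [mul_assoc]
    rw [← mul_assoc (star U) U, hUU, one_mul, ← mul_assoc (diagonal f) (diagonal g),
      diagonal_mul_diagonal]
  have hone : (1 : Matrix (Fin n) (Fin n) ℝ) = U * diagonal (fun _ => (1:ℝ)) * star U := by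
    have h : diagonal (fun _ : Fin n => (1:ℝ)) = 1 := diagonal_one
    rw [h, mul_one, hUUs]
  have hCinv : C⁻¹ = U * diagonal (fun i => (c i)⁻¹) * star U := by
    apply inv_eq_right_inv
    rw [hspec, hdiagmul]
    have h : (fun i => c i * (c i)⁻¹) = fun _ : Fin n => (1:ℝ) :=
      funext fun i => mul_inv_cancel₀ (hcpos i).ne'
    rw [h]
    exact hone.symm
  have hCinv' : C⁻¹ = R⁻¹ * B * R⁻¹ := by
    apply inv_eq_right_inv
    rw [hCdef]
    simp only [mul_assoc]
    rw [← mul_assoc R R⁻¹ (B * R⁻¹), hRRi, one_mul, ← mul_assoc B⁻¹ B R⁻¹, hBiB, one_mul, hRRi]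
  set m : Fin n → ℝ := fun i => (c i)⁻¹ - 1 with hmdef
  set w : Fin n → ℝ := fun i => 1 - c i with hwdef
  have hcm : ∀ i, c i * m i = w i := by
    intro i
    show c i * ((c i)⁻¹ - 1) = 1 - c i
    rw [mul_sub, mul_inv_cancel₀ (hcpos i).ne', mul_one]
  have hRAR : R⁻¹ * A * R⁻¹ = 1 := by
    rw [← hRR, ← mul_assoc R⁻¹ R R, hRiR, one_mul, hRRi]
  have hM : R⁻¹ * (B - A) * R⁻¹ = U * diagonal m * star U := by
    have h1 : R⁻¹ * (B - A) * R⁻¹ = C⁻¹ - 1 := by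
      rw [hCinv', mul_sub, sub_mul, hRAR]
    rw [h1, hCinv, hone, ← sub_mul, ← mul_sub, diagonal_sub]
  have hGm : R⁻¹ * (B - A) = U * diagonal m * star U * R := by
    rw [← hM, mul_assoc (R⁻¹ * (B - A)) R⁻¹ R, hRiR, mul_one]
  have hRW : R * (B⁻¹ * (B - A)) = U * diagonal w * star U * R := by
    have h1 : R * (B⁻¹ * (B - A)) = C * (R⁻¹ * (B - A)) := by
      rw [hCdef]
      simp only [mul_assoc]
      rw [← mul_assoc R R⁻¹ (B - A), hRRi, one_mul]
    rw [h1, hGm, ← mul_assoc C _ R, hspec, hdiagmul, funext hcm]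
  have hMW : R⁻¹ * ((B - A) * (B⁻¹ * (B - A)))
      = U * diagonal (fun i => m i * w i) * star U * R := by
    rw [← mul_assoc R⁻¹ (B - A) (B⁻¹ * (B - A)), hGm,
      mul_assoc (U * diagonal m * star U) R (B⁻¹ * (B - A)), hRW,
      ← mul_assoc (U * diagonal m * star U) (U * diagonal w * star U) R, hdiagmul]
  -- vectors
  set u : Fin n → ℝ := R *ᵥ s with hudef
  set y : Fin n → ℝ := star U *ᵥ u with hydef
  have hUy : U *ᵥ y = u := by
    rw [hydef, mulVec_mulVec, hUUs, one_mulVec]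
  have hUT : Uᵀ = star U := by
    rw [star_eq_conjTranspose, conjTranspose_eq_transpose_of_trivial]
  have hUnorm : ∀ z : Fin n → ℝ, (U *ᵥ z) ⬝ᵥ (U *ᵥ z) = z ⬝ᵥ z := by
    intro z
    rw [dotProduct_mulVec, ← vecMul_transpose, vecMul_vecMul, hUT, hUU, vecMul_one]
  have hGvec : ∀ f : Fin n → ℝ,
      (U * diagonal f * star U) *ᵥ u = U *ᵥ (fun i => f i * y i) := by
    intro f
    rw [← mulVec_mulVec u (U * diagonal f) (star U), ← mulVec_mulVec]
    exact congrArg (U *ᵥ ·) (funext fun i => mulVec_diagonal f (star U *ᵥ u) i)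
  have hGnorm : ∀ f : Fin n → ℝ,
      ((U * diagonal f * star U) *ᵥ u) ⬝ᵥ ((U * diagonal f * star U) *ᵥ u)
        = ∑ i, (f i * y i)^2 := by
    intro f
    rw [hGvec f, hUnorm]
    simp [dotProduct, pow_two]
  -- the four quadratic quantities
  have hn1 : (R⁻¹ *ᵥ ((B - A) *ᵥ s)) ⬝ᵥ (R⁻¹ *ᵥ ((B - A) *ᵥ s)) = ∑ i, (m i * y i)^2 := by
    have h1 : R⁻¹ *ᵥ ((B - A) *ᵥ s) = (U * diagonal m * star U) *ᵥ u := by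
      rw [mulVec_mulVec, hGm, hudef, mulVec_mulVec]
    rw [h1, hGnorm]
  have hd1 : u ⬝ᵥ u = ∑ i, (y i)^2 := by
    rw [← hUy, hUnorm]
    simp [dotProduct, pow_two]
  have hn2 : (R⁻¹ *ᵥ ((B - A) *ᵥ ((B⁻¹ * (B - A)) *ᵥ s))) ⬝ᵥ
      (R⁻¹ *ᵥ ((B - A) *ᵥ ((B⁻¹ * (B - A)) *ᵥ s))) = ∑ i, (m i * w i * y i)^2 := by
    have h1 : R⁻¹ *ᵥ ((B - A) *ᵥ ((B⁻¹ * (B - A)) *ᵥ s))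
        = (U * diagonal (fun i => m i * w i) * star U) *ᵥ u := by
      rw [mulVec_mulVec, mulVec_mulVec, mul_assoc R⁻¹ (B - A) (B⁻¹ * (B - A)), hMW,
        hudef, mulVec_mulVec]
    rw [h1, hGnorm]
  have hd2 : (R *ᵥ ((B⁻¹ * (B - A)) *ᵥ s)) ⬝ᵥ (R *ᵥ ((B⁻¹ * (B - A)) *ᵥ s))
      = ∑ i, (w i * y i)^2 := by
    have h1 : R *ᵥ ((B⁻¹ * (B - A)) *ᵥ s) = (U * diagonal w * star U) *ᵥ u := by
      rw [mulVec_mulVec, hRW, hudef, mulVec_mulVec]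
    rw [h1, hGnorm]
  -- sign condition on m
  have hDm : star U * (R⁻¹ * (B - A) * R⁻¹) * U = diagonal m := by
    rw [hM]
    simp only [mul_assoc]
    rw [hUU, mul_one, ← mul_assoc, hUU, one_mul]
  have hsign : (∀ i, 0 ≤ m i) ∨ (∀ i, m i ≤ 0) := by
    rcases hord with h | h
    · left
      have h1 : ((R⁻¹)ᴴ * (B - A) * R⁻¹).PosSemidef := h.conjTranspose_mul_mul_same R⁻¹
      rw [hRiH.eq] at h1
      have h2 : (Uᴴ * (R⁻¹ * (B - A) * R⁻¹) * U).PosSemidef := h1.conjTranspose_mul_mul_same U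
      rw [← star_eq_conjTranspose, hDm] at h2
      intro i
      have h3 := h2.dotProduct_mulVec_nonneg (Pi.single i 1)
      simpa [mulVec_diagonal, dotProduct, Pi.single_apply, ite_mul, mul_ite] using h3
    · right
      have h1 : ((R⁻¹)ᴴ * (A - B) * R⁻¹).PosSemidef := h.conjTranspose_mul_mul_same R⁻¹
      rw [hRiH.eq] at h1
      have h2 : (Uᴴ * (R⁻¹ * (A - B) * R⁻¹) * U).PosSemidef := h1.conjTranspose_mul_mul_same U
      rw [← star_eq_conjTranspose] at h2
      have h4 : star U * (R⁻¹ * (A - B) * R⁻¹) * U = diagonal (fun i => -(m i)) := by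
        have h5 : A - B = -(B - A) := (neg_sub _ _).symm
        rw [h5, mul_neg, neg_mul, mul_neg, neg_mul, hDm, diagonal_neg]
      rw [h4] at h2
      intro i
      have h3 := h2.dotProduct_mulVec_nonneg (Pi.single i 1)
      have h6 : (0:ℝ) ≤ -(m i) := by
        simpa [mulVec_diagonal, dotProduct, Pi.single_apply, ite_mul, mul_ite] using h3
      linarith
  -- key pointwise inequality
  have hkey : ∀ i j : Fin n, 0 ≤ (m i^2 - m j^2) * (w i^2 - w j^2) ∧
      ((m i^2 - m j^2) * (w i^2 - w j^2) = 0 → w i = w j) := by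
    intro i j
    by_cases h : c i = c j
    · have hmm : m i = m j := by show (c i)⁻¹ - 1 = (c j)⁻¹ - 1; rw [h]
      have hww : w i = w j := by show 1 - c i = 1 - c j; rw [h]
      constructor
      · rw [hmm, hww]; simp
      · intro _; exact hww
    · have hsign' : (0 ≤ (c i)⁻¹ - 1 ∧ 0 ≤ (c j)⁻¹ - 1) ∨
          ((c i)⁻¹ - 1 ≤ 0 ∧ (c j)⁻¹ - 1 ≤ 0) := by
        rcases hsign with hh | hh
        · exact Or.inl ⟨hh i, hh j⟩
        · exact Or.inr ⟨hh i, hh j⟩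
      have hst := key_strict (c i) (c j) (hcpos i) (hcpos j) hsign' h
      constructor
      · exact le_of_lt hst
      · intro heq
        exact absurd heq (ne_of_gt hst)
  -- nonvanishing
  have hs0 : s ≠ 0 := by
    intro h
    apply hs
    rw [h, mulVec_zero]
  have hu0 : u ≠ 0 := fun h => hs0 (hRinj s h)
  have hy0 : y ≠ 0 := by
    intro h
    apply hu0
    rw [← hUy, h, mulVec_zero]
  obtain ⟨i₀, hi₀⟩ : ∃ i, y i ≠ 0 := by
    by_contra h
    push_neg at h
    exact hy0 (funext h)
  have hD1 : 0 < ∑ i, (y i)^2 := by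
    have h1 : (y i₀)^2 ≤ ∑ i, (y i)^2 :=
      Finset.single_le_sum (fun j _ => sq_nonneg (y j)) (Finset.mem_univ i₀)
    have h2 : 0 < (y i₀)^2 := by positivity
    linarith
  have hwy : U *ᵥ (fun i => w i * y i) = R *ᵥ ((B⁻¹ * (B - A)) *ᵥ s) := by
    rw [← hGvec w, mulVec_mulVec, ← hRW]
    exact (mulVec_mulVec s R (B⁻¹ * (B - A))).symm
  have hwy0 : (fun i => w i * y i) ≠ 0 := by
    intro h
    apply hs
    apply hRinj
    rw [← hwy, h, mulVec_zero]
  obtain ⟨j₀, hj₀⟩ : ∃ i, w i * y i ≠ 0 := by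
    by_contra h
    push_neg at h
    exact hwy0 (funext h)
  have hD2 : 0 < ∑ i, (w i * y i)^2 := by
    have h1 : (w j₀ * y j₀)^2 ≤ ∑ i, (w i * y i)^2 :=
      Finset.single_le_sum (fun j _ => sq_nonneg (w j * y j)) (Finset.mem_univ j₀)
    have h2 : 0 < (w j₀ * y j₀)^2 := by positivity
    linarith
  -- double sum identity
  have hterm : ∀ i j : Fin n,
      (0:ℝ) ≤ y i^2 * y j^2 * ((m i^2 - m j^2) * (w i^2 - w j^2)) :=
    fun i j => mul_nonneg (by positivity) (hkey i j).1
  have hsum : ∑ i, ∑ j, y i^2 * y j^2 * ((m i^2 - m j^2) * (w i^2 - w j^2))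
      = 2 * ((∑ i, (m i * w i * y i)^2) * ∑ i, (y i)^2)
        - 2 * ((∑ i, (m i * y i)^2) * ∑ i, (w i * y i)^2) := by
    have h1 : (∑ i, (m i * w i * y i)^2) * (∑ i, (y i)^2)
        = ∑ i, ∑ j, (m i * w i * y i)^2 * (y j)^2 := Finset.sum_mul_sum _ _ _ _
    have h2 : (∑ i, (m i * y i)^2) * (∑ i, (w i * y i)^2)
        = ∑ i, ∑ j, (m i * y i)^2 * (w j * y j)^2 := Finset.sum_mul_sum _ _ _ _
    have h1' : (∑ i, (m i * w i * y i)^2) * (∑ i, (y i)^2)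
        = ∑ i, ∑ j, (m j * w j * y j)^2 * (y i)^2 := by rw [h1]; exact Finset.sum_comm
    have h2' : (∑ i, (m i * y i)^2) * (∑ i, (w i * y i)^2)
        = ∑ i, ∑ j, (m j * y j)^2 * (w i * y i)^2 := by rw [h2]; exact Finset.sum_comm
    calc ∑ i, ∑ j, y i^2 * y j^2 * ((m i^2 - m j^2) * (w i^2 - w j^2))
        = ∑ i, ∑ j, (((m i * w i * y i)^2 * (y j)^2 + (m j * w j * y j)^2 * (y i)^2)
          - ((m i * y i)^2 * (w j * y j)^2 + (m j * y j)^2 * (w i * y i)^2)) :=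
          Finset.sum_congr rfl fun i _ => Finset.sum_congr rfl fun j _ => by ring
      _ = 2 * ((∑ i, (m i * w i * y i)^2) * ∑ i, (y i)^2)
          - 2 * ((∑ i, (m i * y i)^2) * ∑ i, (w i * y i)^2) := by
          simp only [Finset.sum_sub_distrib, Finset.sum_add_distrib]
          rw [← h1, ← h1', ← h2, ← h2']
          ring
  have hmain : (∑ i, (m i * y i)^2) * (∑ i, (w i * y i)^2)
      ≤ (∑ i, (m i * w i * y i)^2) * (∑ i, (y i)^2) := by
    have h0 : (0:ℝ) ≤ ∑ i, ∑ j, y i^2 * y j^2 * ((m i^2 - m j^2) * (w i^2 - w j^2)) :=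
      Finset.sum_nonneg fun i _ => Finset.sum_nonneg fun j _ => hterm i j
    rw [hsum] at h0
    linarith
  rw [hn1, hd1, hn2, hd2]
  refine ⟨?_, ?_, ?_⟩
  · rw [div_le_div_iff₀ hD1 hD2]
    exact hmain
  · intro h
    rw [div_eq_div_iff hD1.ne' hD2.ne'] at h
    have hzero : ∑ i, ∑ j, y i^2 * y j^2 * ((m i^2 - m j^2) * (w i^2 - w j^2)) = 0 := by
      rw [hsum]
      linarith
    have hterm0 : ∀ i j : Fin n,
        y i^2 * y j^2 * ((m i^2 - m j^2) * (w i^2 - w j^2)) = 0 := by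
      intro i j
      have h1 := (Finset.sum_eq_zero_iff_of_nonneg
        (fun i _ => Finset.sum_nonneg fun j _ => hterm i j)).mp hzero i (Finset.mem_univ i)
      exact (Finset.sum_eq_zero_iff_of_nonneg (fun j _ => hterm i j)).mp h1 j (Finset.mem_univ j)
    refine ⟨w i₀, ?_⟩
    have hwy_eq : (fun i => w i * y i) = fun i => w i₀ * y i := by
      funext i
      by_cases hyi : y i = 0
      · rw [hyi, mul_zero, mul_zero]
      · have ht := hterm0 i i₀
        have hne : y i^2 * y i₀^2 ≠ 0 := by positivity
        have hfac : (m i^2 - m i₀^2) * (w i^2 - w i₀^2) = 0 :=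
          (mul_eq_zero.mp ht).resolve_left hne
        rw [(hkey i i₀).2 hfac]
    have h5 : R *ᵥ ((B⁻¹ * (B - A)) *ᵥ s) = R *ᵥ (w i₀ • s) := by
      rw [← hwy, hwy_eq]
      have h6 : (fun i => w i₀ * y i) = w i₀ • y := rfl
      rw [h6, mulVec_smul, hUy, hudef, mulVec_smul]
    have h8 : R *ᵥ ((B⁻¹ * (B - A)) *ᵥ s - w i₀ • s) = 0 := by
      rw [mulVec_sub, h5, sub_self]
    exact sub_eq_zero.mp (hRinj _ h8)
  · rintro ⟨μ, hμ⟩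
    have hμ0 : μ ≠ 0 := by
      intro h
      rw [h, zero_smul] at hμ
      exact hs hμ
    have h5 : U *ᵥ (fun i => w i * y i) = U *ᵥ (μ • y) := by
      rw [hwy, hμ, mulVec_smul, mulVec_smul, hUy, hudef]
    have h6 : (fun i => w i * y i) = μ • y := by
      have h7 := congrArg (fun z => star U *ᵥ z) h5
      simpa [mulVec_mulVec, hUU, one_mulVec] using h7
    have hcoord : ∀ i, w i * y i = μ * y i := fun i => congrFun h6 i
    have hN2 : ∑ i, (m i * w i * y i)^2 = μ^2 * ∑ i, (m i * y i)^2 := by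
      rw [Finset.mul_sum]
      refine Finset.sum_congr rfl fun i _ => ?_
      rw [mul_assoc, hcoord i]
      ring
    have hD2' : ∑ i, (w i * y i)^2 = μ^2 * ∑ i, (y i)^2 := by
      rw [Finset.mul_sum]
      refine Finset.sum_congr rfl fun i _ => ?_
      rw [hcoord i]
      ring
    rw [hN2, hD2', mul_div_mul_left _ _ (pow_ne_zero 2 hμ0)]
end

section
/- Let A, B be n×n real matrices and s ∈ ℝⁿ nonzero, with y = As. Let B₊ = B + (y − Bs)sᵀ/(sᵀs) be the Broyden good update. Then ‖B₊ − A‖_F² = ‖B − A‖_F² − ‖(B − A)s‖₂²/‖s‖₂² (exact equality). -/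
open Matrix

lemma tr_left {n : ℕ} (u v : Fin n → ℝ) (M : Matrix (Fin n) (Fin n) ℝ) :
    trace ((vecMulVec u v)ᵀ * M) = u ⬝ᵥ (M *ᵥ v) := by
  simp only [trace, diag, mul_apply, transpose_apply, vecMulVec_apply, dotProduct, mulVec,
    Finset.mul_sum]
  rw [Finset.sum_comm]
  congr 1; ext i; congr 1; ext j; ring

lemma tr_right {n : ℕ} (u v : Fin n → ℝ) (M : Matrix (Fin n) (Fin n) ℝ) :
    trace (Mᵀ * vecMulVec u v) = u ⬝ᵥ (M *ᵥ v) := by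
  simp only [trace, diag, mul_apply, transpose_apply, vecMulVec_apply, dotProduct, mulVec,
    Finset.mul_sum]
  rw [Finset.sum_comm]
  congr 1; ext i; congr 1; ext j; ring

lemma tr_both {n : ℕ} (u v : Fin n → ℝ) :
    trace ((vecMulVec u v)ᵀ * vecMulVec u v) = (u ⬝ᵥ u) * (v ⬝ᵥ v) := by
  simp only [trace, diag, mul_apply, transpose_apply, vecMulVec_apply, dotProduct]
  rw [Finset.sum_mul_sum, Finset.sum_comm]
  congr 1; ext i; congr 1; ext j; ring

/-- Exact error reduction identity for the Broyden good update. -/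
theorem stmt_8 (n : ℕ) (A B : Matrix (Fin n) (Fin n) ℝ)
    (s : Fin n → ℝ) (hs : s ≠ 0) (y : Fin n → ℝ) (hy : y = A *ᵥ s)
    (Bp : Matrix (Fin n) (Fin n) ℝ)
    (hBp : Bp = B + (s ⬝ᵥ s)⁻¹ • vecMulVec (y - B *ᵥ s) s) :
    trace ((Bp - A)ᵀ * (Bp - A))
      = trace ((B - A)ᵀ * (B - A))
        - (((B - A) *ᵥ s) ⬝ᵥ ((B - A) *ᵥ s)) / (s ⬝ᵥ s) := by
  have hss : s ⬝ᵥ s ≠ 0 := fun h => hs (dotProduct_self_eq_zero.mp h)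
  set E := B - A with hE
  set e := E *ᵥ s with he
  set c := (s ⬝ᵥ s)⁻¹ with hc
  have hrw : Bp - A = E - c • vecMulVec e s := by
    subst hBp hy
    ext i j
    simp only [Matrix.sub_apply, Matrix.add_apply, Matrix.smul_apply, vecMulVec_apply, Pi.sub_apply, hE, he,
      mulVec, dotProduct, Matrix.sub_apply, smul_eq_mul, sub_mul, Finset.sum_sub_distrib]
    ring
  rw [hrw]
  clear_value E e c
  have hee : e ⬝ᵥ (E *ᵥ s) = e ⬝ᵥ e := by rw [← he]
  rw [transpose_sub, transpose_smul, sub_mul, mul_sub, mul_sub, smul_mul_assoc,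
    mul_smul_comm, smul_mul_assoc, mul_smul_comm, smul_smul]
  rw [trace_sub, trace_sub, trace_sub, trace_smul, trace_smul, trace_smul,
    tr_left, tr_right, tr_both, hee]
  simp only [smul_eq_mul]
  rw [hc]
  field_simp [hc]
  ring
end

section
/- Let M be a symmetric positive definite n×n real matrix and A, B n×n real matrices. Let s̃ be the M⁻²-orthogonal projection of s ∈ ℝⁿ onto the M⁻²-orthogonal complement of ker(B − A), and assume s̃ ≠ 0. Then ‖M(B − A)s‖₂²/‖M⁻¹s‖₂² ≤ ‖M(B − A)s̃‖₂²/‖M⁻¹s̃‖₂², with equality if and only if s lies in the M⁻²-orthogonal complement of ker(B − A). -/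
open Matrix

noncomputable def kerSub (n : ℕ) (E : Matrix (Fin n) (Fin n) ℝ) :
    Submodule ℝ (EuclideanSpace ℝ (Fin n)) where
  carrier := {w | E *ᵥ w = 0}
  add_mem' := by intro a b ha hb; simp only [Set.mem_setOf_eq] at *;
                 show E *ᵥ (a + b) = 0
                 rw [Matrix.mulVec_add, ha, hb, add_zero]
  zero_mem' := by show E *ᵥ 0 = 0; simp
  smul_mem' := by intro c a ha; simp only [Set.mem_setOf_eq] at *
                  show E *ᵥ (c • a) = 0
                  rw [Matrix.mulVec_smul, ha, smul_zero]

lemma inner_eq_dot (n : ℕ) (x y : EuclideanSpace ℝ (Fin n)) :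
    (inner ℝ x y : ℝ) = (WithLp.equiv 2 (Fin n → ℝ) x) ⬝ᵥ (WithLp.equiv 2 (Fin n → ℝ) y) := by
  simp [PiLp.inner_apply, dotProduct, mul_comm]

lemma mem_ker_of_orth (n : ℕ) (E : Matrix (Fin n) (Fin n) ℝ) (w : Fin n → ℝ)
    (h : ∀ u : Fin n → ℝ, (∀ x : Fin n → ℝ, E *ᵥ x = 0 → u ⬝ᵥ x = 0) → w ⬝ᵥ u = 0) :
    E *ᵥ w = 0 := by
  have hw : (WithLp.equiv 2 (Fin n → ℝ)).symm w ∈ (kerSub n E)ᗮᗮ := by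
    rw [Submodule.mem_orthogonal]
    intro u hu
    rw [inner_eq_dot]
    have h0 : w ⬝ᵥ (WithLp.equiv 2 (Fin n → ℝ) u) = 0 := by
      apply h
      intro x hx
      have hx' : ((WithLp.equiv 2 (Fin n → ℝ)).symm x) ∈ kerSub n E := hx
      have := (Submodule.mem_orthogonal (kerSub n E) u).mp hu _ hx'
      rw [inner_eq_dot] at this
      rw [dotProduct_comm]
      exact this
    rw [dotProduct_comm]
    exact h0
  rw [Submodule.orthogonal_orthogonal] at hw
  exact hw

/-- Projection operator improvement for the generalized PSB family.
`inT z` says z lies in the M⁻²-orthogonal complement of ker(B − A); s̃ is the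
M⁻²-orthogonal projection of s onto that complement (membership plus minimality). -/
theorem stmt_10 (n : ℕ) (M A B : Matrix (Fin n) (Fin n) ℝ) (hM : M.PosDef)
    (G : Matrix (Fin n) (Fin n) ℝ) (hG : G = M⁻¹ * M⁻¹)
    (s st : Fin n → ℝ)
    (inT : (Fin n → ℝ) → Prop)
    (hinT : inT = fun z => ∀ x : Fin n → ℝ, (B - A) *ᵥ x = 0 → z ⬝ᵥ (G *ᵥ x) = 0)
    (hmem : inT st)
    (hmin : ∀ t : Fin n → ℝ, inT t →
      (s - st) ⬝ᵥ (G *ᵥ (s - st)) ≤ (s - t) ⬝ᵥ (G *ᵥ (s - t)))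
    (hst : st ≠ 0) :
    ((M *ᵥ ((B - A) *ᵥ s)) ⬝ᵥ (M *ᵥ ((B - A) *ᵥ s))) / ((M⁻¹ *ᵥ s) ⬝ᵥ (M⁻¹ *ᵥ s))
      ≤ ((M *ᵥ ((B - A) *ᵥ st)) ⬝ᵥ (M *ᵥ ((B - A) *ᵥ st))) / ((M⁻¹ *ᵥ st) ⬝ᵥ (M⁻¹ *ᵥ st))
    ∧ (((M *ᵥ ((B - A) *ᵥ s)) ⬝ᵥ (M *ᵥ ((B - A) *ᵥ s))) / ((M⁻¹ *ᵥ s) ⬝ᵥ (M⁻¹ *ᵥ s))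
        = ((M *ᵥ ((B - A) *ᵥ st)) ⬝ᵥ (M *ᵥ ((B - A) *ᵥ st))) / ((M⁻¹ *ᵥ st) ⬝ᵥ (M⁻¹ *ᵥ st))
      ↔ inT s) := by
  have hdet : IsUnit M.det := hM.det_pos.ne'.isUnit
  set C : Matrix (Fin n) (Fin n) ℝ := M⁻¹ with hCdef
  have hMC : M * C = 1 := Matrix.mul_nonsing_inv M hdet
  have hCM : C * M = 1 := Matrix.nonsing_inv_mul M hdet
  have hCsym : Cᵀ = C := (hM.isHermitian.inv).eq
  have hnn : ∀ z : Fin n → ℝ, 0 ≤ z ⬝ᵥ z :=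
    fun z => Finset.sum_nonneg fun i _ => mul_self_nonneg _
  -- key : a ⬝ᵥ (G *ᵥ b) = (C *ᵥ a) ⬝ᵥ (C *ᵥ b)
  have key : ∀ a b : Fin n → ℝ, a ⬝ᵥ (G *ᵥ b) = (C *ᵥ a) ⬝ᵥ (C *ᵥ b) := by
    intro a b
    rw [hG, ← Matrix.mulVec_mulVec, Matrix.dotProduct_mulVec a C, ← Matrix.mulVec_transpose,
      hCsym]
  -- C *ᵥ z = 0 → z = 0
  have hCinj : ∀ z : Fin n → ℝ, C *ᵥ z = 0 → z = 0 := by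
    intro z hz
    have : M *ᵥ (C *ᵥ z) = z := by
      rw [Matrix.mulVec_mulVec, hMC, Matrix.one_mulVec]
    rw [hz, Matrix.mulVec_zero] at this
    exact this.symm
  have hMinj : ∀ z : Fin n → ℝ, M *ᵥ z = 0 → z = 0 := by
    intro z hz
    have : C *ᵥ (M *ᵥ z) = z := by
      rw [Matrix.mulVec_mulVec, hCM, Matrix.one_mulVec]
    rw [hz, Matrix.mulVec_zero] at this
    exact this.symm
  set v : Fin n → ℝ := s - st with hv
  -- orthogonality of v to T
  have horth : ∀ t : Fin n → ℝ, inT t → (C *ᵥ v) ⬝ᵥ (C *ᵥ t) = 0 := by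
    intro t ht
    by_cases hq : C *ᵥ t = 0
    · rw [hq, dotProduct_zero]
    · set p : Fin n → ℝ := C *ᵥ v with hp
      set q : Fin n → ℝ := C *ᵥ t with hq2
      have hd : 0 < q ⬝ᵥ q :=
        lt_of_le_of_ne (hnn q) (Ne.symm (mt dotProduct_self_eq_zero.mp hq))
      have hquad : ∀ ε : ℝ, 0 ≤ -(2 * ε * (p ⬝ᵥ q)) + ε ^ 2 * (q ⬝ᵥ q) := by
        intro ε
        have htT : inT (st + ε • t) := by
          rw [hinT] at ht hmem ⊢
          intro x hx
          rw [add_dotProduct, smul_dotProduct, hmem x hx, ht x hx]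
          simp
        have h1 := hmin (st + ε • t) htT
        have hsub : s - (st + ε • t) = v - ε • t := by rw [hv]; abel
        rw [hsub, key, key] at h1
        have hexp : C *ᵥ (v - ε • t) = p - ε • q := by
          rw [Matrix.mulVec_sub, Matrix.mulVec_smul]
        rw [hexp] at h1
        have hcomm : q ⬝ᵥ p = p ⬝ᵥ q := dotProduct_comm q p
        have hexpand : (p - ε • q) ⬝ᵥ (p - ε • q)
            = p ⬝ᵥ p - 2 * ε * (p ⬝ᵥ q) + ε ^ 2 * (q ⬝ᵥ q) := by
          rw [sub_dotProduct, dotProduct_sub, dotProduct_sub,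
            smul_dotProduct, smul_dotProduct, dotProduct_smul,
            dotProduct_smul, hcomm, smul_eq_mul, smul_eq_mul, smul_eq_mul]
          ring
        rw [hexpand] at h1
        linarith
      show p ⬝ᵥ q = 0
      set r : ℝ := p ⬝ᵥ q with hr
      set d : ℝ := q ⬝ᵥ q with hdd
      have h2 := hquad (r / d)
      have e : -(2 * (r / d) * r) + (r / d) ^ 2 * d = -(r ^ 2 / d) := by
        field_simp
        ring
      rw [e] at h2
      have hX : r ^ 2 / d ≤ 0 := by linarith
      have h4 : r ^ 2 ≤ 0 := by
        have := mul_nonpos_of_nonpos_of_nonneg hX hd.le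
        rwa [div_mul_cancel₀ _ hd.ne'] at this
      have h5 : r ^ 2 = 0 := le_antisymm h4 (sq_nonneg r)
      exact sq_eq_zero_iff.mp h5
  -- v ∈ ker (B - A)
  have hker : (B - A) *ᵥ v = 0 := by
    have h0 : ((B - A) * M) *ᵥ (C *ᵥ v) = 0 := by
      apply mem_ker_of_orth
      intro u hu
      set t : Fin n → ℝ := M *ᵥ u with htdef
      have hCt : C *ᵥ t = u := by
        rw [htdef, Matrix.mulVec_mulVec, hCM, Matrix.one_mulVec]
      have htT : inT t := by
        rw [hinT]
        intro x hx
        rw [key, hCt]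
        apply hu
        rw [Matrix.mulVec_mulVec, Matrix.mul_assoc, hMC, Matrix.mul_one, hx]
      rw [← hCt]
      exact horth t htT
    rw [Matrix.mulVec_mulVec, Matrix.mul_assoc, hMC, Matrix.mul_one] at h0
    exact h0
  -- numerators equal
  have hnum : (B - A) *ᵥ s = (B - A) *ᵥ st := by
    have h0 : (B - A) *ᵥ s - (B - A) *ᵥ st = 0 := by
      rw [← Matrix.mulVec_sub]; exact hker
    exact sub_eq_zero.mp h0
  -- orthogonal decomposition of the denominator
  have hov : (C *ᵥ st) ⬝ᵥ (C *ᵥ v) = 0 := by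
    have h0 := hmem
    rw [hinT] at h0
    have h1 := h0 v hker
    rwa [key] at h1
  have hsv : s = st + v := by rw [hv]; abel
  have hCs : C *ᵥ s = C *ᵥ st + C *ᵥ v := by
    rw [← Matrix.mulVec_add, ← hsv]
  have hdecomp : (C *ᵥ s) ⬝ᵥ (C *ᵥ s)
      = (C *ᵥ st) ⬝ᵥ (C *ᵥ st) + (C *ᵥ v) ⬝ᵥ (C *ᵥ v) := by
    rw [hCs, add_dotProduct, dotProduct_add, dotProduct_add, hov,
      dotProduct_comm (C *ᵥ v) (C *ᵥ st), hov]
    ring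
  have hCst : C *ᵥ st ≠ 0 := fun h => hst (hCinj st h)
  have hDst : 0 < (C *ᵥ st) ⬝ᵥ (C *ᵥ st) :=
    lt_of_le_of_ne (hnn _) (Ne.symm (mt dotProduct_self_eq_zero.mp hCst))
  have hDle : (C *ᵥ st) ⬝ᵥ (C *ᵥ st) ≤ (C *ᵥ s) ⬝ᵥ (C *ᵥ s) := by
    rw [hdecomp]
    linarith [hnn (C *ᵥ v)]
  have hDs : 0 < (C *ᵥ s) ⬝ᵥ (C *ᵥ s) := lt_of_lt_of_le hDst hDle
  -- numerator positive
  have hBAst : (B - A) *ᵥ st ≠ 0 := by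
    intro h0
    have h1 := hmem
    rw [hinT] at h1
    have h2 := h1 st h0
    rw [key] at h2
    exact hst (hCinj st (dotProduct_self_eq_zero.mp h2))
  have hMst : M *ᵥ ((B - A) *ᵥ st) ≠ 0 := fun h => hBAst (hMinj _ h)
  have hNst : 0 < (M *ᵥ ((B - A) *ᵥ st)) ⬝ᵥ (M *ᵥ ((B - A) *ᵥ st)) :=
    lt_of_le_of_ne (hnn _) (Ne.symm (mt dotProduct_self_eq_zero.mp hMst))
  constructor
  · rw [hnum]
    gcongr
  · constructor
    · intro heq
      rw [hnum] at heq
      have hDeq : (C *ᵥ st) ⬝ᵥ (C *ᵥ st) = (C *ᵥ s) ⬝ᵥ (C *ᵥ s) := by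
        have h0 := (div_eq_div_iff hDs.ne' hDst.ne').mp heq
        exact mul_left_cancel₀ hNst.ne' h0
      have hvv : (C *ᵥ v) ⬝ᵥ (C *ᵥ v) = 0 := by
        rw [hdecomp] at hDeq
        linarith
      have hv0 : v = 0 := hCinj v (dotProduct_self_eq_zero.mp hvv)
      have hsst : s = st := by
        have := hv0
        rw [hv] at this
        exact sub_eq_zero.mp this
      rwa [hsst]
    · intro hsT
      have hsst : s = st := by
        have h0 := hmin s hsT
        rw [sub_self, Matrix.mulVec_zero, dotProduct_zero, key] at h0
        have hvv : (C *ᵥ v) ⬝ᵥ (C *ᵥ v) = 0 := le_antisymm h0 (hnn _)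
        have hv0 : v = 0 := hCinj v (dotProduct_self_eq_zero.mp hvv)
        rw [hv] at hv0
        exact sub_eq_zero.mp hv0
      rw [hsst]
end

section
/- Let A be a symmetric positive definite n×n real matrix and B a nonsingular n×n real matrix. If s̃ is the A-orthogonal projection of s ∈ ℝⁿ onto the A-orthogonal complement of ker(B − A), then As̃ is the A⁻¹-orthogonal projection of As onto the A⁻¹-orthogonal complement of ker(B⁻¹ − A⁻¹). -/
open Matrix

/-- If s̃ is the A-orthogonal projection of s onto the A-orthogonal complement of
ker(B − A), then As̃ is the A⁻¹-orthogonal projection of As onto the A⁻¹-orthogonal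
complement of ker(B⁻¹ − A⁻¹). Projections are characterized by membership plus
minimality of the weighted distance. -/
theorem stmt_14 (n : ℕ) (A B : Matrix (Fin n) (Fin n) ℝ)
    (hA : A.PosDef) (hB : IsUnit B.det)
    (s st : Fin n → ℝ)
    (inT : (Fin n → ℝ) → Prop)
    (hinT : inT = fun z => ∀ x : Fin n → ℝ, (B - A) *ᵥ x = 0 → z ⬝ᵥ (A *ᵥ x) = 0)
    (hmem : inT st)
    (hmin : ∀ t : Fin n → ℝ, inT t →
      (s - st) ⬝ᵥ (A *ᵥ (s - st)) ≤ (s - t) ⬝ᵥ (A *ᵥ (s - t)))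
    (inT' : (Fin n → ℝ) → Prop)
    (hinT' : inT' = fun z => ∀ x : Fin n → ℝ, (B⁻¹ - A⁻¹) *ᵥ x = 0 → z ⬝ᵥ (A⁻¹ *ᵥ x) = 0) :
    inT' (A *ᵥ st) ∧ ∀ t : Fin n → ℝ, inT' t →
      (A *ᵥ s - A *ᵥ st) ⬝ᵥ (A⁻¹ *ᵥ (A *ᵥ s - A *ᵥ st))
        ≤ (A *ᵥ s - t) ⬝ᵥ (A⁻¹ *ᵥ (A *ᵥ s - t)) := by
  subst hinT hinT'
  have hAdet : IsUnit A.det := isUnit_iff_ne_zero.mpr hA.det_pos.ne'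
  -- cancellation lemmas
  have hAiA : ∀ v : Fin n → ℝ, A⁻¹ *ᵥ (A *ᵥ v) = v := fun v => by
    rw [mulVec_mulVec, nonsing_inv_mul A hAdet, one_mulVec]
  have hAAi : ∀ v : Fin n → ℝ, A *ᵥ (A⁻¹ *ᵥ v) = v := fun v => by
    rw [mulVec_mulVec, mul_nonsing_inv A hAdet, one_mulVec]
  have hBiB : ∀ v : Fin n → ℝ, B⁻¹ *ᵥ (B *ᵥ v) = v := fun v => by
    rw [mulVec_mulVec, nonsing_inv_mul B hB, one_mulVec]
  have hBBi : ∀ v : Fin n → ℝ, B *ᵥ (B⁻¹ *ᵥ v) = v := fun v => by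
    rw [mulVec_mulVec, mul_nonsing_inv B hB, one_mulVec]
  have hAT : Aᵀ = A := hA.isHermitian
  have hATi : A⁻¹ᵀ = A⁻¹ := by rw [transpose_nonsing_inv, hAT]
  -- symmetry of dot products
  have hsym : ∀ v w : Fin n → ℝ, v ⬝ᵥ (A *ᵥ w) = (A *ᵥ v) ⬝ᵥ w := fun v w => by
    rw [dotProduct_mulVec, ← mulVec_transpose, hAT]
  have hsymi : ∀ v w : Fin n → ℝ, v ⬝ᵥ (A⁻¹ *ᵥ w) = (A⁻¹ *ᵥ v) ⬝ᵥ w := fun v w => by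
    rw [dotProduct_mulVec, ← mulVec_transpose, hATi]
  -- kernel correspondence
  have hker : ∀ x : Fin n → ℝ, (B⁻¹ - A⁻¹) *ᵥ x = 0 →
      (B - A) *ᵥ (A⁻¹ *ᵥ x) = 0 := by
    intro x hx
    have h1 : B⁻¹ *ᵥ x = A⁻¹ *ᵥ x :=
      sub_eq_zero.mp (show B⁻¹ *ᵥ x - A⁻¹ *ᵥ x = 0 by rw [← sub_mulVec]; exact hx)
    rw [sub_mulVec, hAAi]
    have h2 : B *ᵥ (A⁻¹ *ᵥ x) = x := by rw [← h1, hBBi]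
    rw [h2, sub_self]
  have hker' : ∀ y : Fin n → ℝ, (B - A) *ᵥ y = 0 →
      (B⁻¹ - A⁻¹) *ᵥ (A *ᵥ y) = 0 := by
    intro y hy
    have h1 : B *ᵥ y = A *ᵥ y :=
      sub_eq_zero.mp (show B *ᵥ y - A *ᵥ y = 0 by rw [← sub_mulVec]; exact hy)
    rw [sub_mulVec, hAiA, ← h1, hBiB, sub_self]
  constructor
  · intro x hx
    have hy := hmem (A⁻¹ *ᵥ x) (hker x hx)
    rw [hAAi] at hy
    rw [hsymi, hAiA]
    exact hy
  · intro t ht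
    have htT : ∀ x : Fin n → ℝ, (B - A) *ᵥ x = 0 → (A⁻¹ *ᵥ t) ⬝ᵥ (A *ᵥ x) = 0 := by
      intro x hx
      have h := ht (A *ᵥ x) (hker' x hx)
      rw [hAiA] at h
      rw [hsym, hAAi]
      exact h
    have key : ∀ u : Fin n → ℝ, (A *ᵥ u) ⬝ᵥ (A⁻¹ *ᵥ (A *ᵥ u)) = u ⬝ᵥ (A *ᵥ u) :=
      fun u => by rw [hAiA, dotProduct_comm]
    calc (A *ᵥ s - A *ᵥ st) ⬝ᵥ (A⁻¹ *ᵥ (A *ᵥ s - A *ᵥ st))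
        = (s - st) ⬝ᵥ (A *ᵥ (s - st)) := by rw [← mulVec_sub, key]
      _ ≤ (s - A⁻¹ *ᵥ t) ⬝ᵥ (A *ᵥ (s - A⁻¹ *ᵥ t)) := hmin (A⁻¹ *ᵥ t) htT
      _ = (A *ᵥ s - t) ⬝ᵥ (A⁻¹ *ᵥ (A *ᵥ s - t)) := by
          conv_rhs => rw [← hAAi t, ← mulVec_sub, key]
end

section
/- Let A be a symmetric positive definite n×n real matrix and B a nonsingular n×n real matrix. If S is a subspace of ker(B − A), then A·S := { As : s ∈ S } is a subspace of ker(B⁻¹ − A⁻¹). Moreover, if s̃ is the A-orthogonal projection of s onto the A-orthogonal complement of S, then As̃ is the A⁻¹-orthogonal projection of As onto the A⁻¹-orthogonal complement of A·S. -/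
open Matrix

/-- If S ⊆ ker(B − A), then A·S ⊆ ker(B⁻¹ − A⁻¹); moreover the A-projection of s onto
the A-orthogonal complement of S maps under A to the A⁻¹-projection of As onto the
A⁻¹-orthogonal complement of A·S. -/
theorem stmt_15 (n : ℕ) (A B : Matrix (Fin n) (Fin n) ℝ)
    (hA : A.PosDef) (hB : IsUnit B.det)
    (S : Submodule ℝ (Fin n → ℝ)) (hS : ∀ x ∈ S, (B - A) *ᵥ x = 0)
    (s st : Fin n → ℝ)
    (inT : (Fin n → ℝ) → Prop)
    (hinT : inT = fun z => ∀ x ∈ S, z ⬝ᵥ (A *ᵥ x) = 0)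
    (hmem : inT st)
    (hmin : ∀ t : Fin n → ℝ, inT t →
      (s - st) ⬝ᵥ (A *ᵥ (s - st)) ≤ (s - t) ⬝ᵥ (A *ᵥ (s - t)))
    (inT' : (Fin n → ℝ) → Prop)
    (hinT' : inT' = fun z => ∀ u ∈ S.map A.mulVecLin, z ⬝ᵥ (A⁻¹ *ᵥ u) = 0) :
    (S.map A.mulVecLin ≤ LinearMap.ker (B⁻¹ - A⁻¹).mulVecLin)
    ∧ inT' (A *ᵥ st)
    ∧ ∀ t : Fin n → ℝ, inT' t →
        (A *ᵥ s - A *ᵥ st) ⬝ᵥ (A⁻¹ *ᵥ (A *ᵥ s - A *ᵥ st))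
          ≤ (A *ᵥ s - t) ⬝ᵥ (A⁻¹ *ᵥ (A *ᵥ s - t)) := by
  have hAunit : IsUnit A.det := isUnit_iff_ne_zero.mpr hA.det_pos.ne'
  have hAinvA : A⁻¹ * A = 1 := nonsing_inv_mul A hAunit
  have hAAinv : A * A⁻¹ = 1 := mul_nonsing_inv A hAunit
  have hAsymm : Aᵀ = A := hA.isHermitian.eq
  have hAinvSymm : (A⁻¹)ᵀ = A⁻¹ := by
    rw [transpose_nonsing_inv, hAsymm]
  -- key: A⁻¹ *ᵥ (A *ᵥ x) = x
  have hinv : ∀ x : Fin n → ℝ, A⁻¹ *ᵥ (A *ᵥ x) = x := fun x => by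
    rw [mulVec_mulVec, hAinvA, one_mulVec]
  subst hinT hinT'
  refine ⟨?_, ?_, ?_⟩
  · rintro u hu
    simp only [Submodule.mem_map] at hu
    obtain ⟨x, hx, rfl⟩ := hu
    have hBx : B *ᵥ x = A *ᵥ x := by
      have := hS x hx
      rwa [sub_mulVec, sub_eq_zero] at this
    have h1 : B⁻¹ *ᵥ (A *ᵥ x) = x := by
      rw [← hBx, mulVec_mulVec, nonsing_inv_mul B hB, one_mulVec]
    simp only [LinearMap.mem_ker, mulVecLin_apply]
    rw [sub_mulVec, h1, hinv, sub_self]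
  · intro u hu
    simp only [Submodule.mem_map] at hu
    obtain ⟨x, hx, rfl⟩ := hu
    rw [mulVecLin_apply, hinv]
    calc (A *ᵥ st) ⬝ᵥ x = st ⬝ᵥ (A *ᵥ x) := by
          rw [dotProduct_comm, dotProduct_mulVec, ← mulVec_transpose, hAsymm, dotProduct_comm]
      _ = 0 := hmem x hx
  · intro t ht
    have htS : ∀ x ∈ S, t ⬝ᵥ x = 0 := fun x hx => by
      have := ht (A *ᵥ x) (Submodule.mem_map_of_mem hx)
      rwa [hinv] at this
    have htinT : ∀ x ∈ S, (A⁻¹ *ᵥ t) ⬝ᵥ (A *ᵥ x) = 0 := fun x hx => by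
      rw [dotProduct_mulVec, ← mulVec_transpose, hAsymm, mulVec_mulVec, hAAinv, one_mulVec]
      exact htS x hx
    have key := hmin (A⁻¹ *ᵥ t) htinT
    have e1 : A *ᵥ s - A *ᵥ st = A *ᵥ (s - st) := (mulVec_sub A s st).symm
    have e2 : A *ᵥ s - t = A *ᵥ (s - A⁻¹ *ᵥ t) := by
      rw [mulVec_sub, mulVec_mulVec, hAAinv, one_mulVec]
    have e3 : ∀ v : Fin n → ℝ, (A *ᵥ v) ⬝ᵥ (A⁻¹ *ᵥ (A *ᵥ v)) = v ⬝ᵥ (A *ᵥ v) := fun v => by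
      rw [hinv]; exact dotProduct_comm _ _
    rw [e1, e2, e3, e3]
    exact key
end

section
/- Consider the Broyden good update process: given n×n real matrices A and B₀, and vectors s₀,…,s_{n−1} ∈ ℝⁿ \ {0} that are pairwise Euclidean-orthogonal (sₖᵀsⱼ = 0 for k ≠ j), define B_{k+1} = B_k + (Asₖ − B_k sₖ)sₖᵀ/(sₖᵀsₖ). Then B_n = A. -/
open Matrix

private lemma vecMulVec_mulVec' {n : ℕ} (w v u : Fin n → ℝ) :
    vecMulVec w v *ᵥ u = (v ⬝ᵥ u) • w := by
  ext i
  simp [Matrix.mulVec, vecMulVec_apply, dotProduct, Finset.sum_mul, Finset.mul_sum]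
  ring_nf

/-- Broyden good updates along n pairwise orthogonal nonzero directions reach B_n = A. -/
theorem stmt_16 (n : ℕ) (A : Matrix (Fin n) (Fin n) ℝ)
    (B : ℕ → Matrix (Fin n) (Fin n) ℝ)
    (s : Fin n → (Fin n → ℝ))
    (hs : ∀ k, s k ≠ 0)
    (horth : ∀ k j, k ≠ j → s k ⬝ᵥ s j = 0)
    (hrec : ∀ k : Fin n,
      B (k + 1) = B k + (s k ⬝ᵥ s k)⁻¹ • vecMulVec (A *ᵥ s k - B k *ᵥ s k) (s k)) :
    B n = A := by
  have hss : ∀ k, s k ⬝ᵥ s k ≠ 0 := by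
    intro k h
    exact hs k (by rwa [dotProduct_self_eq_zero] at h)
  -- key invariant
  have key : ∀ m : ℕ, m ≤ n → ∀ j : Fin n, (j : ℕ) < m → B m *ᵥ s j = A *ᵥ s j := by
    intro m
    induction m with
    | zero => intro _ j hj; omega
    | succ m ih =>
      intro hm j hj
      have hmn : m < n := hm
      have hrec' := hrec ⟨m, hmn⟩
      simp only [Fin.val_mk] at hrec'
      rw [hrec', add_mulVec, smul_mulVec, vecMulVec_mulVec']
      rcases eq_or_ne (j : ℕ) m with he | he
      · have hjm : j = ⟨m, hmn⟩ := Fin.ext he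
        rw [hjm, smul_smul, inv_mul_cancel₀ (hss _), one_smul]
        abel
      · have : (⟨m, hmn⟩ : Fin n) ≠ j := fun h => he (congrArg Fin.val h).symm
        rw [horth _ _ this]
        simp [ih (le_of_lt hm) j (by omega)]
  have hall : ∀ j : Fin n, B n *ᵥ s j = A *ᵥ s j := fun j => key n le_rfl j j.isLt
  -- s is linearly independent, hence a basis
  have hli : LinearIndependent ℝ s := by
    rw [Fintype.linearIndependent_iff]
    intro g hg k
    have h1 : s k ⬝ᵥ (∑ i, g i • s i) = 0 := by rw [hg, dotProduct_zero]
    have h2 : ∑ i, g i * (s k ⬝ᵥ s i) = 0 := by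
      rw [← h1, dotProduct]
      simp only [Finset.sum_apply, Pi.smul_apply, smul_eq_mul, Finset.mul_sum, dotProduct]
      rw [Finset.sum_comm]
      exact Finset.sum_congr rfl fun i _ => Finset.sum_congr rfl fun x _ => by ring
    rw [Finset.sum_eq_single k (fun i _ hik => by rw [horth k i (Ne.symm hik), mul_zero])
      (fun h => absurd (Finset.mem_univ k) h)] at h2
    exact (mul_eq_zero.mp h2).resolve_right (hss k)
  rcases Nat.eq_zero_or_pos n with hn | hn
  · subst hn; ext i j; exact i.elim0
  have : Nonempty (Fin n) := ⟨⟨0, hn⟩⟩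
  have hcard : Fintype.card (Fin n) = Module.finrank ℝ (Fin n → ℝ) := by
    rw [Module.finrank_fintype_fun_eq_card]
  let b : Module.Basis (Fin n) ℝ (Fin n → ℝ) := basisOfLinearIndependentOfCardEqFinrank hli hcard
  have hb : ∀ k, b k = s k := fun k => by
    simp [b, coe_basisOfLinearIndependentOfCardEqFinrank]
  apply Matrix.toLin'.injective
  apply b.ext
  intro k
  rw [hb]
  simpa using hall k
end
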